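/- For a positive definite matrix A and positive semidefinite B, the geometric mean M(A⁻¹, B) := √(A⁻¹)·√(√A·B·√A)·√(A⁻¹) has the same kernel and range as B. -/

import Mathlib

open scoped ComplexOrder

open Classical in
/-- The unique positive semidefinite square root of a positive semidefinite matrix
(junk value 0 otherwise). -/
noncomputable def psqrt {n : Type*} [Fintype n] [DecidableEq n] (X : Matrix n n ℂ) :
    Matrix n n ℂ :=
  if h : X.PosSemidef then
    (h.1.eigenvectorUnitary : Matrix n n ℂ) *
      Matrix.diagonal ((↑) ∘ (fun x : ℝ => Real.sqrt x) ∘ h.1.eigenvalues) *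
      (star h.1.eigenvectorUnitary : Matrix n n ℂ)
  else 0

/-- The range (support) of a matrix, i.e. the orthogonal complement of its kernel. -/
noncomputable def msupp {n : Type*} [Fintype n] [DecidableEq n] (X : Matrix n n ℂ) :
    Submodule ℂ (EuclideanSpace ℂ n) :=
  (LinearMap.ker (Matrix.toEuclideanLin X))ᗮ

/-- The kernel of a matrix, as a subspace of Euclidean space. -/
noncomputable def mker {n : Type*} [Fintype n] [DecidableEq n] (X : Matrix n n ℂ) :
    Submodule ℂ (EuclideanSpace ℂ n) :=
  LinearMap.ker (Matrix.toEuclideanLin X)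

/-- The generalized geometric mean M(A,B) = √A · √(√(A⁺) B √(A⁺)) · √A, where Ap
stands for the Moore–Penrose pseudoinverse A⁺ of A. -/
noncomputable def geoMean {n : Type*} [Fintype n] [DecidableEq n]
    (A Ap B : Matrix n n ℂ) : Matrix n n ℂ :=
  psqrt A * psqrt (psqrt Ap * B * psqrt Ap) * psqrt A

open Matrix
open scoped MatrixOrder

lemma psqrt_of_posSemidef {n : Type*} [Fintype n] [DecidableEq n] {X : Matrix n n ℂ}
    (hX : X.PosSemidef) : psqrt X = CFC.sqrt X := by
  rw [psqrt, dif_pos hX, CFC.sqrt_eq_cfc, cfc_nnreal_eq_real _ X, hX.1.cfc_eq]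
  simp only [IsHermitian.cfc, Unitary.conjStarAlgAut_apply]
  congr 3
  funext i
  simp [hX.eigenvalues_nonneg i]

/-- Kernel of a psd matrix equals that of its square root. -/
lemma sqrt_mulVec_eq_zero_iff {n : Type*} [Fintype n] [DecidableEq n] {X : Matrix n n ℂ}
    (hX : X.PosSemidef) (v : n → ℂ) : CFC.sqrt X *ᵥ v = 0 ↔ X *ᵥ v = 0 := by
  have h : (CFC.sqrt X)ᴴ * CFC.sqrt X = X := by
    rw [(CFC.sqrt_nonneg X).posSemidef.isHermitian.eq, CFC.sqrt_mul_sqrt_self X hX.nonneg]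
  simpa [h] using (Matrix.conjTranspose_mul_self_mulVec_eq_zero (CFC.sqrt X) v).symm

lemma mker_eq_of_mulVec {n : Type*} [Fintype n] [DecidableEq n] {X Y : Matrix n n ℂ}
    (h : ∀ v : n → ℂ, X *ᵥ v = 0 ↔ Y *ᵥ v = 0) : mker X = mker Y := by
  ext x
  simp only [mker, LinearMap.mem_ker, Matrix.toEuclideanLin_apply]
  have key : ∀ Z : Matrix n n ℂ,
      WithLp.toLp 2 (Z *ᵥ x.ofLp) = 0 ↔
        Z *ᵥ x.ofLp = 0 := by
    intro Z
    constructor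
    · intro h0
      have := congrArg (WithLp.equiv 2 (n → ℂ)) h0
      simpa using this
    · intro h0; simp [h0]
  rw [key, key, h]

/-- For positive definite A and positive semidefinite B, the geometric mean
M(A⁻¹,B) = √(A⁻¹) √(√A B √A) √(A⁻¹) has the same kernel and range as B. -/
theorem geoMean_inv_ker_range
    {n : Type*} [Fintype n] [DecidableEq n]
    (A B : Matrix n n ℂ) (hA : A.PosDef) (hB : B.PosSemidef) :
    mker (psqrt A⁻¹ * psqrt (psqrt A * B * psqrt A) * psqrt A⁻¹) = mker B ∧
    msupp (psqrt A⁻¹ * psqrt (psqrt A * B * psqrt A) * psqrt A⁻¹) = msupp B := by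
  have hApsd := hA.posSemidef
  have hAi : A⁻¹.PosDef := hA.inv
  set S := psqrt A with hSdef
  have hSeq : S = CFC.sqrt A := psqrt_of_posSemidef hApsd
  have hS : S.PosSemidef := hSeq ▸ (CFC.sqrt_nonneg A).posSemidef
  have hSS : S * S = A := hSeq ▸ CFC.sqrt_mul_sqrt_self A hApsd.nonneg
  -- S is invertible
  have hdetS : IsUnit S.det := by
    have : S.det * S.det = A.det := by rw [← Matrix.det_mul, hSS]
    have hAd : A.det ≠ 0 := ne_of_gt hA.det_pos
    exact isUnit_iff_ne_zero.mpr fun h => hAd (by rw [← this, h, mul_zero])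
  -- S⁻¹ is posSemidef
  have hSinv : (S⁻¹).PosSemidef := by
    have h1 : (S⁻¹)ᴴ = S⁻¹ := by
      rw [Matrix.conjTranspose_nonsing_inv, hS.isHermitian.eq]
    have : S⁻¹ = (S⁻¹)ᴴ * S * S⁻¹ := by
      rw [h1, Matrix.mul_assoc, Matrix.mul_nonsing_inv _ hdetS, Matrix.mul_one]
    rw [this]
    exact hS.conjTranspose_mul_mul_same _
  -- psqrt A⁻¹ = S⁻¹
  have hT : psqrt A⁻¹ = S⁻¹ := by
    rw [psqrt_of_posSemidef hAi.posSemidef]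
    refine CFC.sqrt_unique ?_ hSinv.nonneg
    rw [← Matrix.mul_inv_rev, hSS]
  have hTS : S⁻¹ * S = 1 := Matrix.nonsing_inv_mul _ hdetS
  have hST : S * S⁻¹ = 1 := Matrix.mul_nonsing_inv _ hdetS
  -- the inner matrix
  have hSBS : (S * B * S).PosSemidef := by
    have : S * B * S = S * B * Sᴴ := by rw [hS.isHermitian.eq]
    rw [this]
    exact hB.mul_mul_conjTranspose_same S
  have hker : mker (psqrt A⁻¹ * psqrt (psqrt A * B * psqrt A) * psqrt A⁻¹) = mker B := by
    apply mker_eq_of_mulVec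
    intro v
    rw [hT, ← hSdef, psqrt_of_posSemidef hSBS]
    set C := CFC.sqrt (S * B * S) with hCdef
    have inj : ∀ w : n → ℂ, S⁻¹ *ᵥ w = 0 ↔ w = 0 := by
      intro w
      constructor
      · intro h
        have := congrArg (S *ᵥ ·) h
        simpa [Matrix.mulVec_mulVec, hST] using this
      · intro h; simp [h]
    have injS : ∀ w : n → ℂ, S *ᵥ w = 0 ↔ w = 0 := by
      intro w
      constructor
      · intro h
        have := congrArg (S⁻¹ *ᵥ ·) h
        simpa [Matrix.mulVec_mulVec, hTS] using this
      · intro h; simp [h]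
    rw [← Matrix.mulVec_mulVec, ← Matrix.mulVec_mulVec, inj,
      sqrt_mulVec_eq_zero_iff hSBS, ← Matrix.mulVec_mulVec, ← Matrix.mulVec_mulVec,
      Matrix.mulVec_mulVec v S S⁻¹, hST, Matrix.one_mulVec, injS]
  exact ⟨hker, by rw [msupp, msupp, ← mker, ← mker, hker]⟩
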